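/- arXiv:2204.03875 — 3 statements merged into one kernel-verified Lean document; each statement's English description precedes it below -/
import Mathlib

section
/- Let 0 < ε ≤ 1, let ε̄ = ε/c1 with c1 ≥ 8·c0, and suppose cost(M_opt) ≤ 9·√d·n/ε. Let M_0, M_1, …, M_{n-1} be matchings between A and B with |M_i| = i and cost(M_i) ≤ (1 + ε/2)·cost(M_opt) for each i. Then Σ_{i=0}^{n-1} adj*_{ε̄,M_i} ≤ 12·√d·ε^{-1}·n·(1 + ln n). -/
open scoped Classical

noncomputable section

/-- Points in `d`-dimensional Euclidean space. -/
abbrev Pt (d : ℕ) : Type := EuclideanSpace ℝ (Fin d)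

/-- `M` is a matching between `A` and `B`: every edge is a pair in `A × B`, and no point
appears in more than one edge. -/
def IsMatching {d : ℕ} (A B : Finset (Pt d)) (M : Finset (Pt d × Pt d)) : Prop :=
  (∀ e ∈ M, e.1 ∈ A ∧ e.2 ∈ B) ∧
  (∀ e ∈ M, ∀ e' ∈ M, e.1 = e'.1 → e = e') ∧
  (∀ e ∈ M, ∀ e' ∈ M, e.2 = e'.2 → e = e')

/-- The cost of a matching: the sum of Euclidean lengths of its edges. -/
def matchCost {d : ℕ} (M : Finset (Pt d × Pt d)) : ℝ :=
  ∑ e ∈ M, dist e.1 e.2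

/-- A point is free with respect to `M` if it lies in no edge of `M`. -/
def IsFree {d : ℕ} (M : Finset (Pt d × Pt d)) (p : Pt d) : Prop :=
  ∀ e ∈ M, e.1 ≠ p ∧ e.2 ≠ p

/-- The edge of the complete bipartite graph joining `u` and `v`, oriented as a pair in
`A × B`. -/
def edgeOf {d : ℕ} (A : Finset (Pt d)) (u v : Pt d) : Pt d × Pt d :=
  if u ∈ A then (u, v) else (v, u)

/-- The edges of a path given by its list of vertices. -/
def pathEdges {d : ℕ} (A : Finset (Pt d)) (L : List (Pt d)) : List (Pt d × Pt d) :=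
  (L.zip L.tail).map fun uv => edgeOf A uv.1 uv.2

/-- The edges of a cycle given by its list of vertices (including the wrap-around edge). -/
def cycleEdges {d : ℕ} (A : Finset (Pt d)) (L : List (Pt d)) : List (Pt d × Pt d) :=
  pathEdges A (L ++ L.take 1)

/-- Two consecutive edges alternate: exactly one of them is a matching edge. -/
def AltRel {d : ℕ} (M : Finset (Pt d × Pt d)) (e f : Pt d × Pt d) : Prop :=
  e ∈ M ↔ f ∉ M

/-- An alternating path with respect to `M`: a simple path in the complete bipartite graph
on `A` and `B` whose edges alternate between edges of `M` and edges not in `M`. -/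
def IsAltPath {d : ℕ} (A B : Finset (Pt d)) (M : Finset (Pt d × Pt d))
    (L : List (Pt d)) : Prop :=
  2 ≤ L.length ∧ L.Nodup ∧ (∀ p ∈ L, p ∈ A ∪ B) ∧
  L.Chain' (fun u v => (u ∈ A ∧ v ∈ B) ∨ (u ∈ B ∧ v ∈ A)) ∧
  (pathEdges A L).Chain' (AltRel M)

/-- An augmenting path: an alternating path whose two endpoints are free. -/
def IsAugPath {d : ℕ} (A B : Finset (Pt d)) (M : Finset (Pt d × Pt d))
    (L : List (Pt d)) : Prop :=
  IsAltPath A B M L ∧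
  (∀ p, L.head? = some p → IsFree M p) ∧
  (∀ p, L.getLast? = some p → IsFree M p)

/-- An alternating cycle with respect to `M`: a simple cycle in the complete bipartite
graph on `A` and `B` whose edges alternate between edges of `M` and edges not in `M`
(including around the wrap-around edge). -/
def IsAltCycle {d : ℕ} (A B : Finset (Pt d)) (M : Finset (Pt d × Pt d))
    (L : List (Pt d)) : Prop :=
  4 ≤ L.length ∧ L.Nodup ∧ (∀ p ∈ L, p ∈ A ∪ B) ∧
  (L ++ L.take 1).Chain' (fun u v => (u ∈ A ∧ v ∈ B) ∨ (u ∈ B ∧ v ∈ A)) ∧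
  (cycleEdges A L).Chain' (AltRel M) ∧
  (∀ e f, (cycleEdges A L).head? = some e → (cycleEdges A L).getLast? = some f →
    AltRel M f e)

/-- The Euclidean length `‖Π‖` of a path or cycle given by its list of edges. -/
def eucLen {d : ℕ} (E : List (Pt d × Pt d)) : ℝ :=
  (E.map fun e => dist e.1 e.2).sum

/-- The net cost of an alternating path or cycle given by its list of edges:
non-matching edges count positively, matching edges negatively. -/
def netCost {d : ℕ} (M : Finset (Pt d × Pt d)) (E : List (Pt d × Pt d)) : ℝ :=
  (E.map fun e => if e ∈ M then -(dist e.1 e.2) else dist e.1 e.2).sum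

/-- The `θ`-adjusted cost `adj_{θ,M}(Π) = netcost_M(Π) + c0·θ·‖Π‖`. -/
def adjCost {d : ℕ} (c0 θ : ℝ) (M : Finset (Pt d × Pt d))
    (E : List (Pt d × Pt d)) : ℝ :=
  netCost M E + c0 * θ * eucLen E

/-- The set of `θ`-adjusted costs of augmenting paths with respect to `M`;
`adj*_{θ,M}` is its least element. -/
def adjSet {d : ℕ} (c0 θ : ℝ) (A B : Finset (Pt d)) (M : Finset (Pt d × Pt d)) : Set ℝ :=
  {x | ∃ L : List (Pt d), IsAugPath A B M L ∧ adjCost c0 θ M (pathEdges A L) = x}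


namespace SA
variable {d : ℕ}

/-- partner in Mopt of a point of A -/
noncomputable def pA (Mopt : Finset (Pt d × Pt d)) (a : Pt d) : Pt d :=
  if h : ∃ b, (a, b) ∈ Mopt then h.choose else a

lemma pA_mem {Mopt : Finset (Pt d × Pt d)} {a : Pt d} (h : ∃ b, (a, b) ∈ Mopt) :
    (a, pA Mopt a) ∈ Mopt := by
  rw [pA, dif_pos h]; exact h.choose_spec

noncomputable def stepB (M : Finset (Pt d × Pt d)) (b : Pt d) : Option (Pt d) :=
  if h : ∃ a, (a, b) ∈ M then some h.choose else none

lemma stepB_some {M : Finset (Pt d × Pt d)} {b : Pt d} {a : Pt d}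
    (h : stepB M b = some a) : (a, b) ∈ M := by
  by_cases h' : ∃ a, (a, b) ∈ M
  · rw [stepB, dif_pos h'] at h
    obtain rfl : h'.choose = a := Option.some.inj h
    exact h'.choose_spec
  · rw [stepB, dif_neg h'] at h
    cases h

lemma stepB_none {M : Finset (Pt d × Pt d)} {b : Pt d}
    (h : stepB M b = none) : ∀ a, (a, b) ∉ M := by
  intro a ha
  rw [stepB, dif_pos ⟨a, ha⟩] at h
  cases h

noncomputable def stp (M Mopt : Finset (Pt d × Pt d)) (a : Pt d) : Option (Pt d) :=
  stepB M (pA Mopt a)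

noncomputable def walkA (M Mopt : Finset (Pt d × Pt d)) : ℕ → Pt d → List (Pt d)
  | 0, _ => []
  | k+1, a => a :: ((stp M Mopt a).elim [] (fun a' => walkA M Mopt k a'))

noncomputable def iterS (M Mopt : Finset (Pt d × Pt d)) : ℕ → Pt d → Option (Pt d)
  | 0, a => some a
  | j+1, a => (iterS M Mopt j a).bind (stp M Mopt)

lemma iterS_front {M Mopt : Finset (Pt d × Pt d)} {a a' : Pt d}
    (h : stp M Mopt a = some a') : ∀ j, iterS M Mopt (j+1) a = iterS M Mopt j a' := by
  intro j
  induction j with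
  | zero => simp [iterS, h]
  | succ m ih => rw [iterS, ih]; rfl


def FreeA (M : Finset (Pt d × Pt d)) (a : Pt d) : Prop := ∀ e ∈ M, e.1 ≠ a

section Hyps
variable {A B : Finset (Pt d)} {M Mopt : Finset (Pt d × Pt d)}

lemma pA_mem' (hcov : ∀ a ∈ A, ∃ b, (a, b) ∈ Mopt) {a : Pt d} (ha : a ∈ A) :
    (a, pA Mopt a) ∈ Mopt := pA_mem (hcov a ha)

lemma pA_B (hMopt : IsMatching A B Mopt) (hcov : ∀ a ∈ A, ∃ b, (a, b) ∈ Mopt)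
    {a : Pt d} (ha : a ∈ A) : pA Mopt a ∈ B :=
  (hMopt.1 _ (pA_mem' hcov ha)).2

lemma pA_inj (hMopt : IsMatching A B Mopt) (hcov : ∀ a ∈ A, ∃ b, (a, b) ∈ Mopt)
    {a a' : Pt d} (ha : a ∈ A) (ha' : a' ∈ A) (h : pA Mopt a = pA Mopt a') : a = a' := by
  have h1 := pA_mem' hcov ha
  have h2 := pA_mem' hcov ha'
  have := hMopt.2.2 _ h1 _ h2 (by simpa using h)
  exact congrArg Prod.fst this

lemma stp_mem_A (hM : IsMatching A B M) {x z : Pt d} (h : stp M Mopt x = some z) :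
    z ∈ A := (hM.1 _ (stepB_some h)).1

lemma stp_inj (hM : IsMatching A B M) (hMopt : IsMatching A B Mopt)
    (hcov : ∀ a ∈ A, ∃ b, (a, b) ∈ Mopt) {x y z : Pt d} (hx : x ∈ A) (hy : y ∈ A)
    (h1 : stp M Mopt x = some z) (h2 : stp M Mopt y = some z) : x = y := by
  have e1 := stepB_some h1
  have e2 := stepB_some h2
  have := hM.2.1 _ e1 _ e2 rfl
  exact pA_inj hMopt hcov hx hy (congrArg Prod.snd this)

lemma stp_free {a : Pt d} (hfree : FreeA M a) (x : Pt d) : stp M Mopt x ≠ some a := by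
  intro h
  exact hfree _ (stepB_some h) rfl

lemma iterS_mem_A (hM : IsMatching A B M) {a x : Pt d} {j : ℕ} (ha : a ∈ A)
    (h : iterS M Mopt j a = some x) : x ∈ A := by
  induction j generalizing x with
  | zero => rw [iterS] at h; cases h; exact ha
  | succ m ih =>
    rw [iterS] at h
    obtain ⟨y, hy, hyx⟩ := Option.bind_eq_some_iff.mp h
    exact stp_mem_A hM hyx

lemma iter_peel (hM : IsMatching A B M) (hMopt : IsMatching A B Mopt)
    (hcov : ∀ a ∈ A, ∃ b, (a, b) ∈ Mopt) {a a' x : Pt d} :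
    ∀ {j s : ℕ}, a ∈ A → a' ∈ A → iterS M Mopt j a = some x →
      iterS M Mopt (j + s) a' = some x → iterS M Mopt s a' = some a := by
  intro j
  induction j generalizing x with
  | zero =>
    intro s ha ha' h1 h2
    rw [iterS] at h1
    cases h1
    simpa using h2
  | succ m ih =>
    intro s ha ha' h1 h2
    rw [iterS] at h1
    obtain ⟨y, hy, hyx⟩ := Option.bind_eq_some_iff.mp h1
    rw [show m + 1 + s = (m + s) + 1 by omega, iterS] at h2
    obtain ⟨y', hy', hyx'⟩ := Option.bind_eq_some_iff.mp h2
    have hyA : y ∈ A := iterS_mem_A hM ha hy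
    have hyA' : y' ∈ A := iterS_mem_A hM ha' hy'
    obtain rfl : y = y' := stp_inj hM hMopt hcov hyA hyA' hyx hyx'
    exact ih ha ha' hy hy'

lemma iter_cross (hM : IsMatching A B M) (hMopt : IsMatching A B Mopt)
    (hcov : ∀ a ∈ A, ∃ b, (a, b) ∈ Mopt) {a a' x : Pt d} {j j' : ℕ}
    (ha : a ∈ A) (ha' : a' ∈ A) (hf : FreeA M a) (hf' : FreeA M a')
    (h1 : iterS M Mopt j a = some x) (h2 : iterS M Mopt j' a' = some x) :
    a = a' ∧ j = j' := by
  rcases le_total j j' with hle | hle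
  · obtain ⟨s, rfl⟩ := Nat.exists_eq_add_of_le hle
    have hpeel := iter_peel hM hMopt hcov ha ha' h1 h2
    match s, hpeel with
    | 0, hp => rw [iterS] at hp; exact ⟨(Option.some.inj hp).symm, by omega⟩
    | s+1, hp =>
      rw [iterS] at hp
      obtain ⟨y, _, hyx⟩ := Option.bind_eq_some_iff.mp hp
      exact absurd hyx (stp_free hf y)
  · obtain ⟨s, rfl⟩ := Nat.exists_eq_add_of_le hle
    have hpeel := iter_peel hM hMopt hcov ha' ha h2 h1
    match s, hpeel with
    | 0, hp => rw [iterS] at hp; exact ⟨Option.some.inj hp, by omega⟩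
    | s+1, hp =>
      rw [iterS] at hp
      obtain ⟨y, _, hyx⟩ := Option.bind_eq_some_iff.mp hp
      exact absurd hyx (stp_free hf' y)


lemma walkA_ne_nil {k : ℕ} (a : Pt d) : walkA M Mopt (k+1) a ≠ [] := by
  rw [walkA]; simp

lemma walkA_head {k : ℕ} (a : Pt d) : (walkA M Mopt (k+1) a).head? = some a := by
  rw [walkA]; rfl

lemma walkA_length_le : ∀ (k : ℕ) (a : Pt d), (walkA M Mopt k a).length ≤ k := by
  intro k
  induction k with
  | zero => intro a; rw [walkA]; simp
  | succ m ih =>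
    intro a
    rw [walkA]
    cases h : stp M Mopt a with
    | none => simp
    | some a' => simpa using ih a'

lemma walkA_get : ∀ (k : ℕ) (a : Pt d) (j : ℕ), j < (walkA M Mopt k a).length →
    iterS M Mopt j a = (walkA M Mopt k a)[j]? := by
  intro k
  induction k with
  | zero => intro a j hj; rw [walkA] at hj; simp at hj
  | succ m ih =>
    intro a j hj
    rw [walkA] at hj ⊢
    cases h : stp M Mopt a with
    | none =>
      rw [h] at hj
      simp only [Option.elim] at hj ⊢
      obtain rfl : j = 0 := Nat.lt_one_iff.mp (by simpa using hj)
      simp [iterS]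
    | some a' =>
      rw [h] at hj
      simp only [Option.elim] at hj ⊢
      match j with
      | 0 => simp [iterS]
      | j+1 =>
        rw [iterS_front h j]
        simpa using ih a' j (by simpa using hj)

lemma walkA_mem_iter {k : ℕ} {a x : Pt d} (h : x ∈ walkA M Mopt k a) :
    ∃ j, iterS M Mopt j a = some x := by
  obtain ⟨j, hj, rfl⟩ := List.getElem_of_mem h
  refine ⟨j, ?_⟩
  rw [walkA_get k a j hj, List.getElem?_eq_getElem hj]


lemma walkA_mem_A (hM : IsMatching A B M) {k : ℕ} {a x : Pt d} (ha : a ∈ A)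
    (h : x ∈ walkA M Mopt k a) : x ∈ A := by
  obtain ⟨j, hj⟩ := walkA_mem_iter h
  exact iterS_mem_A hM ha hj

lemma walkA_nodup (hM : IsMatching A B M) (hMopt : IsMatching A B Mopt)
    (hcov : ∀ a ∈ A, ∃ b, (a, b) ∈ Mopt) {k : ℕ} {a : Pt d} (ha : a ∈ A)
    (hf : FreeA M a) : (walkA M Mopt k a).Nodup := by
  rw [List.nodup_iff_injective_get]
  rintro ⟨j, hj⟩ ⟨j', hj'⟩ h
  simp only [List.get_eq_getElem] at h
  have h1 := walkA_get (M := M) (Mopt := Mopt) k a j hj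
  have h2 := walkA_get (M := M) (Mopt := Mopt) k a j' hj'
  rw [List.getElem?_eq_getElem hj] at h1
  rw [List.getElem?_eq_getElem hj'] at h2
  rw [h] at h1
  have := (iter_cross hM hMopt hcov ha ha hf hf h1 h2).2
  simpa using this

lemma walkA_chain : ∀ (k : ℕ) (a : Pt d),
    (walkA M Mopt k a).Chain' (fun x y => stp M Mopt x = some y) := by
  intro k
  induction k with
  | zero => intro a; rw [walkA]; exact List.isChain_nil
  | succ m ih =>
    intro a
    rw [walkA]
    cases h : stp M Mopt a with
    | none => exact List.isChain_singleton _
    | some a' =>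
      simp only [Option.elim]
      show List.IsChain _ _
      rw [List.isChain_cons]
      refine ⟨?_, ih a'⟩
      intro y hy
      cases m with
      | zero => rw [walkA] at hy; simp at hy
      | succ m' =>
        rw [walkA_head] at hy
        cases hy
        exact h

lemma walkA_term : ∀ (k : ℕ) (a : Pt d), (walkA M Mopt k a).length = k ∨
    (∀ x, (walkA M Mopt k a).getLast? = some x → stp M Mopt x = none) := by
  intro k
  induction k with
  | zero => intro a; left; rw [walkA]; rfl
  | succ m ih =>
    intro a
    rw [walkA]
    cases h : stp M Mopt a with
    | none =>
      right
      intro x hx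
      simp only [Option.elim] at hx
      simp at hx
      subst hx
      exact h
    | some a' =>
      simp only [Option.elim]
      cases hw : walkA M Mopt m a' with
      | nil =>
        left
        cases m with
        | zero => simp
        | succ m' => exact absurd hw (walkA_ne_nil a')
      | cons z zs =>
        rcases ih a' with hl | hr
        · left
          rw [hw] at hl
          simp only [List.length_cons] at hl ⊢
          omega
        · right
          intro x hx
          rw [List.getLast?_cons_cons] at hx
          exact hr x (by rw [hw]; exact hx)

end Hyps

def Lw (Mopt : Finset (Pt d × Pt d)) : List (Pt d) → List (Pt d)
  | [] => []
  | x :: t => x :: pA Mopt x :: Lw Mopt t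

def Ew (Mopt : Finset (Pt d × Pt d)) : List (Pt d) → List (Pt d × Pt d)
  | [] => []
  | [x] => [(x, pA Mopt x)]
  | x :: y :: t => (x, pA Mopt x) :: (y, pA Mopt x) :: Ew Mopt (y :: t)

lemma pathEdges_nil (A : Finset (Pt d)) : pathEdges A [] = [] := rfl

lemma pathEdges_single (A : Finset (Pt d)) (u : Pt d) : pathEdges A [u] = [] := rfl

lemma pathEdges_cons (A : Finset (Pt d)) (u v : Pt d) (l : List (Pt d)) :
    pathEdges A (u :: v :: l) = edgeOf A u v :: pathEdges A (v :: l) := rfl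

lemma mem_Lw {Mopt : Finset (Pt d × Pt d)} {z : Pt d} :
    ∀ {w : List (Pt d)}, z ∈ Lw Mopt w ↔ ∃ x ∈ w, z = x ∨ z = pA Mopt x := by
  intro w
  induction w with
  | nil => simp [Lw]
  | cons x t ih =>
    simp only [Lw, List.mem_cons, ih]
    constructor
    · rintro (rfl | rfl | ⟨y, hy, h⟩)
      · exact ⟨z, Or.inl rfl, Or.inl rfl⟩
      · exact ⟨x, Or.inl rfl, Or.inr rfl⟩
      · exact ⟨y, Or.inr hy, h⟩
    · rintro ⟨y, hy, hz⟩
      rcases hy with rfl | hy'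
      · rcases hz with rfl | rfl
        · exact Or.inl rfl
        · exact Or.inr (Or.inl rfl)
      · exact Or.inr (Or.inr ⟨y, hy', hz⟩)

section Hyps3
variable {A B : Finset (Pt d)} {M Mopt : Finset (Pt d × Pt d)}

lemma pe_eq (hAB : Disjoint A B) (hMopt : IsMatching A B Mopt)
    (hcov : ∀ a ∈ A, ∃ b, (a, b) ∈ Mopt) :
    ∀ (w : List (Pt d)), (∀ x ∈ w, x ∈ A) →
      pathEdges A (Lw Mopt w) = Ew Mopt w
  | [], _ => rfl
  | [x], h1 => by
    have hx : x ∈ A := h1 x (by simp)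
    simp only [Lw, Ew, pathEdges_cons, pathEdges_single, edgeOf, if_pos hx]
  | x :: y :: t, h1 => by
    have hx : x ∈ A := h1 x (by simp)
    have hpx : pA Mopt x ∉ A := fun hin =>
      (Finset.disjoint_left.mp hAB) hin (pA_B hMopt hcov hx)
    have ht : ∀ z ∈ y :: t, z ∈ A := fun z hz => h1 z (List.mem_cons_of_mem x hz)
    have ih := pe_eq hAB hMopt hcov (y :: t) ht
    show pathEdges A (x :: pA Mopt x :: Lw Mopt (y :: t)) = _
    rw [show Lw Mopt (y :: t) = y :: pA Mopt y :: Lw Mopt t from rfl]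
    rw [pathEdges_cons, pathEdges_cons]
    rw [show (y : Pt d) :: pA Mopt y :: Lw Mopt t = Lw Mopt (y :: t) from rfl]
    rw [ih]
    rw [edgeOf, if_pos hx, edgeOf, if_neg hpx]
    rfl

lemma Lw_nodup (hAB : Disjoint A B) (hMopt : IsMatching A B Mopt)
    (hcov : ∀ a ∈ A, ∃ b, (a, b) ∈ Mopt) :
    ∀ (w : List (Pt d)), (∀ x ∈ w, x ∈ A) → w.Nodup → (Lw Mopt w).Nodup := by
  intro w
  induction w with
  | nil => intro _ _; simp [Lw]
  | cons x t ih =>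
    intro h1 h2
    have hx : x ∈ A := h1 x (by simp)
    have ht : ∀ z ∈ t, z ∈ A := fun z hz => h1 z (List.mem_cons_of_mem x hz)
    have hxt : x ∉ t := (List.nodup_cons.mp h2).1
    have htn : t.Nodup := (List.nodup_cons.mp h2).2
    rw [show Lw Mopt (x :: t) = x :: pA Mopt x :: Lw Mopt t from rfl]
    rw [List.nodup_cons, List.nodup_cons]
    refine ⟨?_, ?_, ih ht htn⟩
    · simp only [List.mem_cons]
      push_neg
      refine ⟨?_, ?_⟩
      · intro hcontra
        exact (Finset.disjoint_left.mp hAB) hx (hcontra ▸ pA_B hMopt hcov hx)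
      · intro hmem
        rw [mem_Lw] at hmem
        obtain ⟨y, hy, rfl | rfl⟩ := hmem
        · exact hxt hy
        · exact (Finset.disjoint_left.mp hAB) hx (pA_B hMopt hcov (ht y hy))
    · intro hmem
      rw [mem_Lw] at hmem
      obtain ⟨y, hy, heq | heq⟩ := hmem
      · exact (Finset.disjoint_left.mp hAB) (ht y hy) (heq ▸ pA_B hMopt hcov hx)
      · exact hxt (pA_inj hMopt hcov hx (ht y hy) heq ▸ hy)

lemma Lw_bip (hMopt : IsMatching A B Mopt) (hcov : ∀ a ∈ A, ∃ b, (a, b) ∈ Mopt) :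
    ∀ (w : List (Pt d)), (∀ x ∈ w, x ∈ A) →
      (Lw Mopt w).Chain' (fun u v => (u ∈ A ∧ v ∈ B) ∨ (u ∈ B ∧ v ∈ A))
  | [], _ => by exact List.isChain_nil
  | [x], h1 => by
    have hx : x ∈ A := h1 x (by simp)
    simp only [Lw]
    exact List.isChain_pair.mpr (Or.inl ⟨hx, pA_B hMopt hcov hx⟩)
  | x :: y :: t, h1 => by
    have hx : x ∈ A := h1 x (by simp)
    have hy : y ∈ A := h1 y (by simp)
    have ih := Lw_bip hMopt hcov (y :: t) (fun z hz => h1 z (List.mem_cons_of_mem x hz))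
    show List.Chain' _ (x :: pA Mopt x :: y :: pA Mopt y :: Lw Mopt t)
    show List.IsChain _ _
    rw [List.isChain_cons_cons, List.isChain_cons_cons]
    exact ⟨Or.inl ⟨hx, pA_B hMopt hcov hx⟩, Or.inr ⟨pA_B hMopt hcov hx, hy⟩, ih⟩

lemma Lw_head (Mopt : Finset (Pt d × Pt d)) (x : Pt d) (t : List (Pt d)) :
    (Lw Mopt (x :: t)).head? = some x := rfl

lemma cons_getLast? (u : Pt d) {l : List (Pt d)} (hl : l ≠ []) :
    (u :: l).getLast? = l.getLast? := by
  cases l with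
  | nil => exact absurd rfl hl
  | cons b l' => rw [List.getLast?_cons_cons]

lemma Lw_last {Mopt : Finset (Pt d × Pt d)} :
    ∀ (w : List (Pt d)) (x : Pt d), w.getLast? = some x →
      (Lw Mopt w).getLast? = some (pA Mopt x)
  | [], x, h => by cases h
  | [y], x, h => by
    obtain rfl : y = x := by simpa using h
    rfl
  | y :: z :: t, x, h => by
    rw [List.getLast?_cons_cons] at h
    have ih := Lw_last (Mopt := Mopt) (z :: t) x h
    show (y :: pA Mopt y :: Lw Mopt (z :: t)).getLast? = _
    rw [List.getLast?_cons_cons]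
    rw [cons_getLast? (pA Mopt y) (show Lw Mopt (z :: t) ≠ [] from List.cons_ne_nil _ _)]
    exact ih


lemma Ew_head (Mopt : Finset (Pt d × Pt d)) (y : Pt d) (t : List (Pt d)) :
    (Ew Mopt (y :: t)).head? = some (y, pA Mopt y) := by
  cases t with
  | nil => rfl
  | cons z t' => rfl

lemma notinM (hM : IsMatching A B M) (hMopt : IsMatching A B Mopt)
    (hcov : ∀ a ∈ A, ∃ b, (a, b) ∈ Mopt) :
    ∀ (w : List (Pt d)), w.Nodup → (∀ x ∈ w, x ∈ A) →
      w.Chain' (fun x y => (y, pA Mopt x) ∈ M) →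
      (∀ x, w.head? = some x → (x, pA Mopt x) ∉ M) →
      ∀ x ∈ w, (x, pA Mopt x) ∉ M := by
  intro w
  induction w with
  | nil => intro _ _ _ _ x hx; simp at hx
  | cons x t ih =>
    intro hnd hA hch hhd z hz
    rcases List.mem_cons.mp hz with rfl | hz'
    · exact hhd z rfl
    · cases t with
      | nil => simp at hz'
      | cons y t' =>
        have hxA : x ∈ A := hA x (by simp)
        have hyA : y ∈ A := hA y (by simp)
        have hinM : (y, pA Mopt x) ∈ M := (List.isChain_cons_cons.mp hch).1
        refine ih (List.nodup_cons.mp hnd).2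
          (fun u hu => hA u (List.mem_cons_of_mem x hu))
          (List.isChain_cons_cons.mp hch).2 ?_ z hz'
        intro u hu
        obtain rfl : y = u := by simpa using hu
        intro hcon
        have h1 := hM.2.1 _ hcon _ hinM rfl
        have h2 : pA Mopt y = pA Mopt x := congrArg Prod.snd h1
        have h3 : y = x := pA_inj hMopt hcov hyA hxA h2
        exact (List.nodup_cons.mp hnd).1 (h3 ▸ List.mem_cons_self)

lemma Ew_alt (hM : IsMatching A B M) :
    ∀ (w : List (Pt d)), w.Chain' (fun x y => (y, pA Mopt x) ∈ M) →
      (∀ x ∈ w, (x, pA Mopt x) ∉ M) →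
      (Ew Mopt w).Chain' (AltRel M)
  | [], _, _ => by exact List.isChain_nil
  | [x], _, _ => by exact List.isChain_singleton _
  | x :: y :: t, hch, hnin => by
    have hinM : (y, pA Mopt x) ∈ M := (List.isChain_cons_cons.mp hch).1
    have ih := Ew_alt hM (y :: t) (List.isChain_cons_cons.mp hch).2
      (fun u hu => hnin u (List.mem_cons_of_mem x hu))
    show List.Chain' (AltRel M) ((x, pA Mopt x) :: (y, pA Mopt x) :: Ew Mopt (y :: t))
    show List.IsChain _ _
    rw [List.isChain_cons_cons]
    constructor
    · exact ⟨fun h => absurd h (hnin x (by simp)), fun h => absurd hinM h⟩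
    · show List.IsChain _ _
      rw [List.isChain_cons]
      refine ⟨?_, ih⟩
      intro e he
      rw [Ew_head] at he
      obtain rfl : (y, pA Mopt y) = e := by simpa using he
      exact ⟨fun _ => hnin y (by simp), fun _ => hinM⟩

lemma Ew_cost (hM : IsMatching A B M) {t : ℝ} (ht0 : 0 ≤ t) (ht1 : t ≤ 1) :
    ∀ (w : List (Pt d)), w.Chain' (fun x y => (y, pA Mopt x) ∈ M) →
      (∀ x ∈ w, (x, pA Mopt x) ∉ M) →
      netCost M (Ew Mopt w) + t * eucLen (Ew Mopt w) ≤
        (1 + t) * ((w.map fun x => dist x (pA Mopt x)).sum)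
  | [], _, _ => by simp [Ew, netCost, eucLen]
  | [x], _, hnin => by
    simp only [Ew, netCost, eucLen, List.map_cons, List.map_nil, List.sum_cons,
      List.sum_nil]
    rw [if_neg (hnin x (by simp))]
    ring_nf
    nlinarith [dist_nonneg (x := x) (y := pA Mopt x)]
  | x :: y :: tl, hch, hnin => by
    have hinM : (y, pA Mopt x) ∈ M := (List.isChain_cons_cons.mp hch).1
    have ih := Ew_cost hM ht0 ht1 (y :: tl) (List.isChain_cons_cons.mp hch).2
      (fun u hu => hnin u (List.mem_cons_of_mem x hu))
    have hne : netCost M (Ew Mopt (x :: y :: tl)) =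
        dist x (pA Mopt x) - dist y (pA Mopt x) + netCost M (Ew Mopt (y :: tl)) := by
      show netCost M ((x, pA Mopt x) :: (y, pA Mopt x) :: Ew Mopt (y :: tl)) = _
      simp only [netCost, List.map_cons, List.sum_cons]
      rw [if_neg (hnin x (by simp)), if_pos hinM]
      ring
    have heu : eucLen (Ew Mopt (x :: y :: tl)) =
        dist x (pA Mopt x) + dist y (pA Mopt x) + eucLen (Ew Mopt (y :: tl)) := by
      show eucLen ((x, pA Mopt x) :: (y, pA Mopt x) :: Ew Mopt (y :: tl)) = _
      simp only [eucLen, List.map_cons, List.sum_cons]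
      ring
    have hmap : ((x :: y :: tl).map fun z => dist z (pA Mopt z)).sum =
        dist x (pA Mopt x) + ((y :: tl).map fun z => dist z (pA Mopt z)).sum := by
      simp
    rw [hne, heu, hmap]
    have hd2 : (0 : ℝ) ≤ dist y (pA Mopt x) := dist_nonneg
    nlinarith


lemma main_path (hAB : Disjoint A B) (hM : IsMatching A B M) (hMopt : IsMatching A B Mopt)
    (hcov : ∀ a ∈ A, ∃ b, (a, b) ∈ Mopt) {a : Pt d} (ha : a ∈ A) (hf : FreeA M a)
    {c0 θ : ℝ} (ht0 : 0 ≤ c0 * θ) (ht1 : c0 * θ ≤ 1) :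
    IsAugPath A B M (Lw Mopt (walkA M Mopt (A.card + 1) a)) ∧
    adjCost c0 θ M (pathEdges A (Lw Mopt (walkA M Mopt (A.card + 1) a))) ≤
      (1 + c0 * θ) *
        (((walkA M Mopt (A.card + 1) a).map fun x => dist x (pA Mopt x)).sum) := by
  set w := walkA M Mopt (A.card + 1) a with hw
  have wne : w ≠ [] := walkA_ne_nil a
  have wA : ∀ x ∈ w, x ∈ A := fun x hx => walkA_mem_A hM ha hx
  have wnd : w.Nodup := walkA_nodup hM hMopt hcov ha hf
  have whead : w.head? = some a := walkA_head a
  have wch : w.Chain' (fun x y => (y, pA Mopt x) ∈ M) :=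
    (walkA_chain (A.card + 1) a).imp (fun x y h => stepB_some h)
  have wlen : w.length ≤ A.card := by
    rw [← List.toFinset_card_of_nodup wnd]
    exact Finset.card_le_card (fun x hx => wA x (List.mem_toFinset.mp hx))
  have wterm : ∀ x, w.getLast? = some x → stp M Mopt x = none := by
    rcases walkA_term (M := M) (Mopt := Mopt) (A.card + 1) a with hl | hr
    · rw [← hw] at hl; omega
    · rw [← hw] at hr; exact hr
  have hheadnin : ∀ x, w.head? = some x → (x, pA Mopt x) ∉ M := by
    intro x hx
    rw [whead] at hx
    obtain rfl : a = x := by simpa using hx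
    intro hcon
    exact hf _ hcon rfl
  have hnin : ∀ x ∈ w, (x, pA Mopt x) ∉ M := notinM hM hMopt hcov w wnd wA wch hheadnin
  have hpe : pathEdges A (Lw Mopt w) = Ew Mopt w := pe_eq hAB hMopt hcov w wA
  constructor
  · refine ⟨⟨?_, ?_, ?_, ?_, ?_⟩, ?_, ?_⟩
    · obtain ⟨x, t, hwxt⟩ := List.exists_cons_of_ne_nil wne
      rw [hwxt]
      show 2 ≤ (x :: pA Mopt x :: Lw Mopt t).length
      simp only [List.length_cons]
      omega
    · exact Lw_nodup hAB hMopt hcov w wA wnd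
    · intro p hp
      rw [mem_Lw] at hp
      obtain ⟨x, hx, h1 | h1⟩ := hp
      · rw [h1]; exact Finset.mem_union_left _ (wA x hx)
      · rw [h1]; exact Finset.mem_union_right _ (pA_B hMopt hcov (wA x hx))
    · exact Lw_bip hMopt hcov w wA
    · rw [hpe]; exact Ew_alt hM w wch hnin
    · intro p hp
      obtain ⟨x, t, hwxt⟩ := List.exists_cons_of_ne_nil wne
      rw [hwxt, Lw_head] at hp
      have hax : w.head? = some x := by rw [hwxt]; rfl
      rw [whead] at hax
      have hax' : a = x := by simpa using hax
      have hpx : x = p := by simpa using hp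
      rw [← hpx, ← hax']
      intro e he
      refine ⟨hf e he, ?_⟩
      intro hcon
      exact (Finset.disjoint_left.mp hAB) ha (hcon ▸ (hM.1 e he).2)
    · intro p hp
      have hlast : w.getLast? = some (w.getLast wne) := List.getLast?_eq_getLast wne
      rw [Lw_last w (w.getLast wne) hlast] at hp
      obtain rfl : pA Mopt (w.getLast wne) = p := by simpa using hp
      have hlx : w.getLast wne ∈ w := List.getLast_mem wne
      have hstp : stp M Mopt (w.getLast wne) = none := wterm _ hlast
      intro e he
      constructor
      · intro hcon
        exact (Finset.disjoint_left.mp hAB) (hM.1 e he).1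
          (hcon ▸ pA_B hMopt hcov (wA _ hlx))
      · intro hcon
        exact stepB_none hstp e.1 (by rw [← hcon]; exact he)
  · rw [adjCost, hpe]
    exact Ew_cost hM ht0 ht1 w wch hnin


lemma walk_disj (hM : IsMatching A B M) (hMopt : IsMatching A B Mopt)
    (hcov : ∀ a ∈ A, ∃ b, (a, b) ∈ Mopt) {a a' : Pt d} (ha : a ∈ A) (ha' : a' ∈ A)
    (hf : FreeA M a) (hf' : FreeA M a') (hne : a ≠ a') :
    Disjoint (walkA M Mopt (A.card + 1) a).toFinset
      (walkA M Mopt (A.card + 1) a').toFinset := by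
  rw [Finset.disjoint_left]
  intro x hx hx'
  obtain ⟨j, hj⟩ := walkA_mem_iter (List.mem_toFinset.mp hx)
  obtain ⟨j', hj'⟩ := walkA_mem_iter (List.mem_toFinset.mp hx')
  exact hne (iter_cross hM hMopt hcov ha ha' hf hf' hj hj').1

lemma cov_of_card (hMopt : IsMatching A B Mopt) (hcard : Mopt.card = A.card) :
    ∀ a ∈ A, ∃ b, (a, b) ∈ Mopt := by
  intro a ha
  have hinj : Set.InjOn Prod.fst Mopt := fun e he e' he' h => hMopt.2.1 e he e' he' h
  have hsub : Mopt.image Prod.fst ⊆ A := by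
    intro x hx
    obtain ⟨e, he, rfl⟩ := Finset.mem_image.mp hx
    exact (hMopt.1 e he).1
  have hcardi : (Mopt.image Prod.fst).card = Mopt.card := Finset.card_image_of_injOn hinj
  have heq : Mopt.image Prod.fst = A :=
    Finset.eq_of_subset_of_card_le hsub (by rw [hcardi, hcard])
  rw [← heq] at ha
  obtain ⟨e, he, hfst⟩ := Finset.mem_image.mp ha
  obtain ⟨e1, e2⟩ := e
  cases hfst
  exact ⟨e2, he⟩

lemma cost_eq (hMopt : IsMatching A B Mopt) (hcov : ∀ a ∈ A, ∃ b, (a, b) ∈ Mopt) :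
    matchCost Mopt = ∑ a ∈ A, dist a (pA Mopt a) := by
  have himg : Mopt = A.image (fun a => (a, pA Mopt a)) := by
    apply Finset.ext
    intro e
    constructor
    · intro he
      have h1 : e.1 ∈ A := (hMopt.1 e he).1
      have h2 : (e.1, pA Mopt e.1) ∈ Mopt := pA_mem' hcov h1
      have h3 : e = (e.1, pA Mopt e.1) := hMopt.2.1 e he _ h2 rfl
      exact Finset.mem_image.mpr ⟨e.1, h1, h3.symm⟩
    · intro he
      obtain ⟨a, ha, rfl⟩ := Finset.mem_image.mp he
      exact pA_mem' hcov ha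
  show ∑ e ∈ Mopt, dist e.1 e.2 = _
  calc ∑ e ∈ Mopt, dist e.1 e.2
      = ∑ e ∈ A.image (fun a => (a, pA Mopt a)), dist e.1 e.2 := by rw [← himg]
    _ = ∑ a ∈ A, dist a (pA Mopt a) :=
        Finset.sum_image (fun x _ y _ h => congrArg Prod.fst h)

lemma sum_walks_le (hM : IsMatching A B M) (hMopt : IsMatching A B Mopt)
    (hcov : ∀ a ∈ A, ∃ b, (a, b) ∈ Mopt) {F : Finset (Pt d)} (hFsub : F ⊆ A)
    (hFfree : ∀ a ∈ F, FreeA M a) :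
    ∑ a ∈ F, (((walkA M Mopt (A.card + 1) a).map fun x => dist x (pA Mopt x)).sum) ≤
      matchCost Mopt := by
  have hstep : ∀ a ∈ F,
      (((walkA M Mopt (A.card + 1) a).map fun x => dist x (pA Mopt x)).sum) =
        ∑ x ∈ (walkA M Mopt (A.card + 1) a).toFinset, dist x (pA Mopt x) := by
    intro a ha
    rw [List.sum_toFinset _ (walkA_nodup hM hMopt hcov (hFsub ha) (hFfree a ha))]
  rw [Finset.sum_congr rfl hstep]
  rw [← Finset.sum_biUnion]
  · rw [cost_eq hMopt hcov]
    apply Finset.sum_le_sum_of_subset_of_nonneg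
    · intro x hx
      obtain ⟨a, ha, hxa⟩ := Finset.mem_biUnion.mp hx
      exact walkA_mem_A hM (hFsub ha) (List.mem_toFinset.mp hxa)
    · intro x _ _
      exact dist_nonneg
  · intro a ha a' ha' hne
    exact walk_disj hM hMopt hcov (hFsub ha) (hFsub ha')
      (hFfree a ha) (hFfree a' ha') hne

end Hyps3
end SA

/-- let `0 < ε ≤ 1`, `ε̄ = ε/c1` with `c1 ≥ 8·c0`, and suppose
`cost(Mopt) ≤ 9·√d·n/ε`.  If `M 0, …, M (n-1)` are matchings with `|M i| = i` and
`cost(M i) ≤ (1 + ε/2)·cost(Mopt)`, then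
`Σ_{i=0}^{n-1} adj*_{ε̄,M i} ≤ 12·√d·ε⁻¹·n·(1 + ln n)`. -/
theorem stmt13 (d n : ℕ) (hn : 1 ≤ n) (A B : Finset (Pt d)) (hAB : Disjoint A B)
    (hA : A.card = n) (hB : B.card = n)
    (ε c0 c1 εu : ℝ) (hε : 0 < ε) (hε1 : ε ≤ 1)
    (hc0 : 0 < c0) (hc1 : 8 * c0 ≤ c1) (hεu : εu = ε / c1)
    (Mopt : Finset (Pt d × Pt d)) (hMopt : IsMatching A B Mopt) (hMoptcard : Mopt.card = n)
    (hMoptmin : ∀ M'' : Finset (Pt d × Pt d),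
      IsMatching A B M'' → M''.card = n → matchCost Mopt ≤ matchCost M'')
    (hopt : matchCost Mopt ≤ 9 * Real.sqrt d * n / ε)
    (M : Fin n → Finset (Pt d × Pt d))
    (hM : ∀ i : Fin n, IsMatching A B (M i))
    (hMcard : ∀ i : Fin n, (M i).card = i)
    (hMcost : ∀ i : Fin n, matchCost (M i) ≤ (1 + ε / 2) * matchCost Mopt)
    (astar : Fin n → ℝ)
    (hastar : ∀ i : Fin n, IsLeast (adjSet c0 εu A B (M i)) (astar i)) :
    ∑ i : Fin n, astar i ≤ 12 * Real.sqrt d * ε⁻¹ * n * (1 + Real.log n) := by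
  have hcov : ∀ a ∈ A, ∃ b, (a, b) ∈ Mopt :=
    SA.cov_of_card hMopt (by rw [hMoptcard, hA])
  have hc1pos : (0:ℝ) < c1 := lt_of_lt_of_le (by linarith) hc1
  have ht0 : 0 ≤ c0 * εu := by
    rw [hεu]
    exact mul_nonneg hc0.le (div_nonneg hε.le hc1pos.le)
  have ht8 : c0 * εu ≤ ε / 8 := by
    rw [hεu]
    have h1 : c0 * (ε / c1) = c0 * ε / c1 := by ring
    rw [h1, div_le_div_iff₀ hc1pos (by norm_num : (0:ℝ) < 8)]
    nlinarith [hε.le]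
  have ht1 : c0 * εu ≤ 1 := le_trans ht8 (by linarith)
  have hCnn : 0 ≤ matchCost Mopt := Finset.sum_nonneg (fun e _ => dist_nonneg)
  set C := matchCost Mopt with hC
  have key : ∀ i : Fin n, astar i ≤ ((1 + c0 * εu) * C) * ((n : ℝ) - i)⁻¹ := by
    intro i
    have hMim : IsMatching A B (M i) := hM i
    have himg_sub : (M i).image Prod.fst ⊆ A := by
      intro x hx
      obtain ⟨e, he, rfl⟩ := Finset.mem_image.mp hx
      exact (hMim.1 e he).1
    have himg_card : ((M i).image Prod.fst).card = (i : ℕ) := by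
      rw [Finset.card_image_of_injOn (fun e he e' he' h => hMim.2.1 e he e' he' h),
        hMcard i]
    set F := A \ (M i).image Prod.fst with hF
    have hFsub : F ⊆ A := Finset.sdiff_subset
    have hFcard : F.card = n - (i : ℕ) := by
      rw [hF, Finset.card_sdiff_of_subset himg_sub, himg_card, hA]
    have hFfree : ∀ a ∈ F, SA.FreeA (M i) a := by
      intro a ha e he h1
      exact (Finset.mem_sdiff.mp ha).2 (Finset.mem_image.mpr ⟨e, he, h1⟩)
    have hbound : ∀ a ∈ F, astar i ≤
        (1 + c0 * εu) *
          (((SA.walkA (M i) Mopt (A.card + 1) a).map fun x =>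
            dist x (SA.pA Mopt x)).sum) := by
      intro a ha
      obtain ⟨hpath, hcost⟩ := SA.main_path (c0 := c0) (θ := εu) hAB hMim hMopt hcov
        (hFsub ha) (hFfree a ha) ht0 ht1
      exact le_trans ((hastar i).2 ⟨_, hpath, rfl⟩) hcost
    have hsum : (F.card : ℝ) * astar i ≤ (1 + c0 * εu) * C := by
      have h1 := Finset.sum_le_sum hbound
      rw [Finset.sum_const, nsmul_eq_mul, ← Finset.mul_sum] at h1
      refine le_trans h1 ?_
      exact mul_le_mul_of_nonneg_left
        (SA.sum_walks_le hMim hMopt hcov hFsub hFfree) (by linarith)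
    have hlt : (i : ℕ) < n := i.2
    have hpos : (0:ℝ) < (n:ℝ) - i := by
      have : ((i:ℕ):ℝ) < (n:ℝ) := by exact_mod_cast hlt
      linarith
    have hcast : (F.card : ℝ) = (n:ℝ) - i := by
      rw [hFcard, Nat.cast_sub hlt.le]
    rw [hcast] at hsum
    have h2 : astar i ≤ ((1 + c0 * εu) * C) / ((n:ℝ) - i) :=
      (le_div_iff₀ hpos).mpr (by linarith [hsum])
    rwa [div_eq_mul_inv] at h2
  have hlogn : (0:ℝ) ≤ Real.log n :=
    Real.log_nonneg (by exact_mod_cast hn)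
  have hH : ∑ i : Fin n, ((n : ℝ) - i)⁻¹ ≤ 1 + Real.log n := by
    have h1 : ∑ i : Fin n, ((n : ℝ) - (i : ℕ))⁻¹ =
        ∑ k ∈ Finset.range n, ((n : ℝ) - k)⁻¹ :=
      Fin.sum_univ_eq_sum_range (fun k => ((n : ℝ) - k)⁻¹) n
    have h2 := Finset.sum_range_reflect (fun k => ((n : ℝ) - k)⁻¹) n
    have h3 : ∀ k ∈ Finset.range n, ((n : ℝ) - ((n - 1 - k : ℕ) : ℝ))⁻¹ =
        ((k : ℝ) + 1)⁻¹ := by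
      intro k hk
      have hk' : k < n := Finset.mem_range.mp hk
      have hn1 : (n - 1 - k : ℕ) + (k + 1) = n := by omega
      have hcast : ((n - 1 - k : ℕ) : ℝ) = (n:ℝ) - ((k:ℝ) + 1) := by
        have := congrArg (Nat.cast : ℕ → ℝ) hn1
        push_cast at this
        linarith
      rw [hcast]
      ring_nf
    have h4 : ∑ k ∈ Finset.range n, ((n : ℝ) - k)⁻¹ =
        ∑ k ∈ Finset.range n, ((k : ℝ) + 1)⁻¹ := by
      rw [← h2, Finset.sum_congr rfl h3]
    have h5 : ((harmonic n : ℚ) : ℝ) = ∑ k ∈ Finset.range n, ((k : ℝ) + 1)⁻¹ := by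
      rw [harmonic]
      push_cast
      rfl
    rw [h1, h4, ← h5]
    exact harmonic_le_one_add_log n
  have hsum2 : ∑ i : Fin n, astar i ≤ ((1 + c0 * εu) * C) * (1 + Real.log n) := by
    have h1 := Finset.sum_le_sum (s := Finset.univ) (fun i _ => key i)
    rw [← Finset.mul_sum] at h1
    refine le_trans h1 ?_
    apply mul_le_mul_of_nonneg_left hH
    nlinarith
  refine le_trans hsum2 ?_
  have hP : (0:ℝ) ≤ Real.sqrt d := Real.sqrt_nonneg d
  have hu : (0:ℝ) ≤ ε⁻¹ := inv_nonneg.mpr hε.le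
  have hnn : (1:ℝ) ≤ n := by exact_mod_cast hn
  have hL : (0:ℝ) ≤ 1 + Real.log n := by linarith
  have hCb : C ≤ 9 * Real.sqrt d * n * ε⁻¹ := by
    rw [hC]
    calc matchCost Mopt ≤ 9 * Real.sqrt d * n / ε := hopt
      _ = 9 * Real.sqrt d * n * ε⁻¹ := by rw [div_eq_mul_inv]
  have s1 : (1 + c0 * εu) * C ≤ (9/8) * C := by nlinarith
  have s2 : (9/8) * C ≤ (9/8) * (9 * Real.sqrt d * n * ε⁻¹) := by nlinarith
  have s3 : ((1 + c0 * εu) * C) * (1 + Real.log n) ≤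
      ((9/8) * (9 * Real.sqrt d * n * ε⁻¹)) * (1 + Real.log n) :=
    mul_le_mul_of_nonneg_right (s1.trans s2) hL
  refine le_trans s3 ?_
  have hprod : (0:ℝ) ≤ Real.sqrt d * n * ε⁻¹ * (1 + Real.log n) := by positivity
  nlinarith [hprod]
end
end

section
/- Let G be a graph on vertex set A ∪ B such that every edge (p,q) of G satisfies ‖p−q‖ ≤ w (Euclidean norm), and suppose every connected component X of G satisfies |X ∩ A| = |X ∩ B|. Then there exists a perfect matching between A and B of cost at most n²·w; in particular cost(M_opt) ≤ n²·w. -/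
open scoped Classical

noncomputable section

/-- The simple graph associated to an adjacency relation. -/
def SG {d : ℕ} (Adj : Pt d → Pt d → Prop) : SimpleGraph (Pt d) where
  Adj u v := (Adj u v ∨ Adj v u) ∧ u ≠ v
  symm := ⟨by
    intro u v h
    exact ⟨h.1.symm, h.2.symm⟩⟩
  loopless := ⟨by
    intro v h
    exact h.2 rfl⟩

private lemma chain'_exists_prev {α : Type*} {R : α → α → Prop} :
    ∀ {l : List α} {x v : α}, List.Chain' R (x :: l) → v ∈ l → ∃ u, R u v := by
  intro l
  induction l with
  | nil => intro x v _ hv; simp at hv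
  | cons y l ih =>
    intro x v hc hv
    rcases List.mem_cons.1 hv with rfl | hv
    · exact ⟨x, (List.isChain_cons_cons.1 hc).1⟩
    · exact ih (List.isChain_cons_cons.1 hc).2 hv

section lemmas

variable {d : ℕ} {Adj : Pt d → Pt d → Prop}

lemma rtg_of_walk (hsym : ∀ u v, Adj u v → Adj v u) :
    ∀ {u v : Pt d}, (SG Adj).Walk u v → Relation.ReflTransGen Adj u v := by
  intro u v p
  induction p with
  | nil => exact Relation.ReflTransGen.refl
  | cons h _ ih =>
    refine Relation.ReflTransGen.head ?_ ih
    exact h.1.elim id (hsym _ _)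

lemma rtg_to_sg {u v : Pt d} (h : Relation.ReflTransGen Adj u v) :
    Relation.ReflTransGen (SG Adj).Adj u v := by
  induction h with
  | refl => exact Relation.ReflTransGen.refl
  | tail _ hstep ih =>
    rename_i b c _
    rcases eq_or_ne b c with rfl | hne
    · exact ih
    · exact Relation.ReflTransGen.tail ih ⟨Or.inl hstep, hne⟩

lemma walk_dist {w : ℝ} (hlen : ∀ u v, Adj u v → dist u v ≤ w) :
    ∀ {u v : Pt d} (p : (SG Adj).Walk u v), dist u v ≤ (p.length : ℝ) * w := by
  intro u v p
  induction p with
  | nil => simp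
  | cons h p ih =>
    rename_i a b c
    have hab : dist a b ≤ w := by
      rcases h.1 with h' | h'
      · exact hlen _ _ h'
      · rw [dist_comm]; exact hlen _ _ h'
    calc dist a c ≤ dist a b + dist b c := dist_triangle _ _ _
      _ ≤ w + (p.length : ℝ) * w := add_le_add hab ih
      _ = (((SimpleGraph.Walk.cons h p).length : ℕ) : ℝ) * w := by
          rw [SimpleGraph.Walk.length_cons]; push_cast; ring

end lemmas

/-- Main induction: if `A' ⊆ A`, `B' ⊆ B` have equal cardinality `m` and every
reachability class contains as many points of `A'` as of `B'`, then there is a perfect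
matching between `A'` and `B'` of cost at most `m(2n-m)·w`. -/
lemma main_lemma {d : ℕ} (A B : Finset (Pt d)) (hAB : Disjoint A B) (n : ℕ)
    (hA : A.card = n) (hB : B.card = n)
    (w : ℝ) (Adj : Pt d → Pt d → Prop)
    (hsym : ∀ u v, Adj u v → Adj v u)
    (hvert : ∀ u v, Adj u v → u ∈ A ∪ B ∧ v ∈ A ∪ B)
    (hlen : ∀ u v, Adj u v → dist u v ≤ w) :
    ∀ m (A' B' : Finset (Pt d)), A' ⊆ A → B' ⊆ B → A'.card = m → B'.card = m →
    (∀ v : Pt d, (A'.filter fun x => Relation.ReflTransGen Adj v x).card =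
      (B'.filter fun x => Relation.ReflTransGen Adj v x).card) →
    ∃ M, IsMatching A' B' M ∧ M.card = m ∧
      matchCost M ≤ ((m : ℝ) * (2 * (n : ℝ) - (m : ℝ))) * w := by
  intro m
  induction m with
  | zero =>
    intro A' B' _ _ _ _ _
    refine ⟨∅, ⟨?_, ?_, ?_⟩, ?_, ?_⟩ <;> simp [IsMatching, matchCost]
  | succ m ih =>
    intro A' B' hA'A hB'B hA' hB' hbal
    -- there is a connected pair
    have hmn : m + 1 ≤ n := hA ▸ hA' ▸ Finset.card_le_card hA'A
    obtain ⟨a1, ha1⟩ : ∃ a, a ∈ A' := (Finset.card_pos.1 (by omega) : A'.Nonempty)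
    have hpair : ∃ b ∈ B', Relation.ReflTransGen Adj a1 b := by
      have h1 : a1 ∈ A'.filter fun x => Relation.ReflTransGen Adj a1 x :=
        Finset.mem_filter.2 ⟨ha1, Relation.ReflTransGen.refl⟩
      have h2 : 0 < (B'.filter fun x => Relation.ReflTransGen Adj a1 x).card := by
        rw [← hbal a1]
        exact Finset.card_pos.2 ⟨a1, h1⟩
      obtain ⟨b, hb⟩ := Finset.card_pos.1 h2
      exact ⟨b, (Finset.mem_filter.1 hb).1, (Finset.mem_filter.1 hb).2⟩
    obtain ⟨b1, hb1, hab1⟩ := hpair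
    -- set of achievable walk lengths between live pairs
    set PL : ℕ → Prop := fun L =>
      ∃ a ∈ A', ∃ b ∈ B', ∃ p : (SG Adj).Walk a b, p.length = L with hPLdef
    have hPL : ∃ L, PL L := by
      have : (SG Adj).Reachable a1 b1 :=
        ((SG Adj).reachable_iff_reflTransGen a1 b1).2 (rtg_to_sg hab1)
      obtain ⟨p⟩ := this
      exact ⟨p.length, a1, ha1, b1, hb1, p, rfl⟩
    set L0 := Nat.find hPL with hL0def
    obtain ⟨a0, ha0, b0, hb0, p, hp⟩ := Nat.find_spec hPL
    -- the bypass is a path of the same (minimal) length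
    set q := p.bypass with hq
    have hqpath : q.IsPath := p.bypass_isPath
    have hqlen : q.length = L0 := by
      have h1 : q.length ≤ L0 := by
        rw [hq, hL0def, ← hp]
        exact p.length_bypass_le
      have hx : PL q.length := ⟨a0, ha0, b0, hb0, q, rfl⟩
      have h2 : L0 ≤ q.length := Nat.find_le hx
      exact le_antisymm h1 h2
    have ha0A : a0 ∈ A := hA'A ha0
    have hb0B : b0 ∈ B := hB'B hb0
    have hne : a0 ≠ b0 := fun h => Finset.disjoint_left.1 hAB ha0A (h ▸ hb0B)
    have hL0pos : 1 ≤ L0 := by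
      rcases Nat.eq_zero_or_pos L0 with h | h
      · exact absurd (SimpleGraph.Walk.eq_of_length_eq_zero (hqlen.trans h)) hne
      · exact h
    -- every interior vertex of q lies in (A ∪ B) \ (A' ∪ B')
    have hw0 : 0 ≤ w := by
      rcases (Relation.ReflTransGen.cases_head hab1) with h | ⟨c, hc, _⟩
      · exact absurd h (fun h => Finset.disjoint_left.1 hAB (hA'A ha1) (h ▸ hB'B hb1))
      · exact le_trans dist_nonneg (hlen _ _ hc)
    have hint : ∀ v ∈ q.support, v ≠ a0 → v ≠ b0 →
        v ∈ (A ∪ B) \ (A' ∪ B') := by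
      intro v hv hva hvb
      have hvAB : v ∈ A ∪ B := by
        have hv' : v ∈ q.support.tail := by
          have := q.support_eq_cons
          rw [this] at hv
          rcases List.mem_cons.1 hv with rfl | h
          · exact absurd rfl hva
          · exact h
        obtain ⟨u, hu⟩ := chain'_exists_prev (q.support_eq_cons ▸ q.isChain_adj_support) hv'
        rcases hu.1 with h' | h'
        · exact (hvert _ _ h').2
        · exact (hvert _ _ h').1
      refine Finset.mem_sdiff.2 ⟨hvAB, ?_⟩
      intro hv'
      rcases Finset.mem_union.1 hv' with hvA' | hvB'
      · -- shorter walk from v to b0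
        have hlt : (q.dropUntil v hv).length < L0 := by
          have hspec := congrArg SimpleGraph.Walk.length (q.take_spec hv)
          rw [SimpleGraph.Walk.length_append, hqlen] at hspec
          have h1 : 1 ≤ (q.takeUntil v hv).length := by
            by_contra h
            push_neg at h
            interval_cases h' : (q.takeUntil v hv).length
            · exact hva (SimpleGraph.Walk.eq_of_length_eq_zero h').symm
          omega
        have hx : PL (q.dropUntil v hv).length := ⟨v, hvA', b0, hb0, q.dropUntil v hv, rfl⟩
        have := Nat.find_le (h := hPL) hx
        omega
      · -- shorter walk from a0 to v
        have hlt : (q.takeUntil v hv).length < L0 := by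
          have hspec := congrArg SimpleGraph.Walk.length (q.take_spec hv)
          rw [SimpleGraph.Walk.length_append, hqlen] at hspec
          have h1 : 1 ≤ (q.dropUntil v hv).length := by
            by_contra h
            push_neg at h
            interval_cases h' : (q.dropUntil v hv).length
            · exact hvb (SimpleGraph.Walk.eq_of_length_eq_zero h')
          omega
        have hx : PL (q.takeUntil v hv).length := ⟨a0, ha0, v, hvB', q.takeUntil v hv, rfl⟩
        have := Nat.find_le (h := hPL) hx
        omega
    -- counting: L0 ≤ 2(n - (m+1)) + 1
    have hcount : L0 + 2 * m + 2 ≤ 2 * n + 1 := by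
      have hnodup : q.support.Nodup := hqpath.support_nodup
      have htf : q.support.toFinset.card = L0 + 1 := by
        rw [List.toFinset_card_of_nodup hnodup, SimpleGraph.Walk.length_support, hqlen]
      have hsub : ({a0, b0} : Finset (Pt d)) ⊆ q.support.toFinset := by
        intro x hx
        rcases Finset.mem_insert.1 hx with rfl | hx
        · exact List.mem_toFinset.2 q.start_mem_support
        · rw [Finset.mem_singleton] at hx
          subst hx
          exact List.mem_toFinset.2 q.end_mem_support
      have hScard : (q.support.toFinset \ {a0, b0}).card = L0 + 1 - 2 := by
        rw [Finset.card_sdiff_of_subset hsub, htf, Finset.card_pair hne]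
      have hSsub : q.support.toFinset \ {a0, b0} ⊆ (A ∪ B) \ (A' ∪ B') := by
        intro v hv
        obtain ⟨hv1, hv2⟩ := Finset.mem_sdiff.1 hv
        have hva : v ≠ a0 := fun h => hv2 (by simp [h])
        have hvb : v ≠ b0 := fun h => hv2 (by simp [h])
        exact hint v (List.mem_toFinset.1 hv1) hva hvb
      have hle := Finset.card_le_card hSsub
      have hABcard : (A ∪ B).card = n + n := by
        rw [Finset.card_union_of_disjoint hAB, hA, hB]
      have hA'B'sub : A' ∪ B' ⊆ A ∪ B := Finset.union_subset_union hA'A hB'B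
      have hA'B'card : (A' ∪ B').card = (m + 1) + (m + 1) := by
        rw [Finset.card_union_of_disjoint (hAB.mono hA'A hB'B), hA', hB']
      have hRcard : ((A ∪ B) \ (A' ∪ B')).card = (n + n) - ((m + 1) + (m + 1)) := by
        rw [Finset.card_sdiff_of_subset hA'B'sub, hABcard, hA'B'card]
      omega
    -- cost of the chosen pair
    have hdist : dist a0 b0 ≤ (2 * (n : ℝ) - 2 * (m : ℝ) - 1) * w := by
      have h1 : dist a0 b0 ≤ (L0 : ℝ) * w := hqlen ▸ walk_dist hlen q
      have h2 : (L0 : ℝ) ≤ 2 * (n : ℝ) - 2 * (m : ℝ) - 1 := by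
        have : (L0 : ℝ) + 2 * (m : ℝ) + 2 ≤ 2 * (n : ℝ) + 1 := by exact_mod_cast hcount
        linarith
      calc dist a0 b0 ≤ (L0 : ℝ) * w := h1
        _ ≤ (2 * (n : ℝ) - 2 * (m : ℝ) - 1) * w := mul_le_mul_of_nonneg_right h2 hw0
    -- reachability equivalence for the removed pair
    have hab0 : Relation.ReflTransGen Adj a0 b0 := rtg_of_walk hsym q
    have hiff : ∀ v, Relation.ReflTransGen Adj v a0 ↔ Relation.ReflTransGen Adj v b0 := by
      have hba0 : Relation.ReflTransGen Adj b0 a0 :=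
        by haveI : Std.Symm Adj := ⟨fun x y h => hsym x y h⟩; exact Std.Symm.symm _ _ hab0
      intro v
      exact ⟨fun h => h.trans hab0, fun h => h.trans hba0⟩
    -- recursive call on the erased sets
    have hbal' : ∀ v : Pt d,
        ((A'.erase a0).filter fun x => Relation.ReflTransGen Adj v x).card =
        ((B'.erase b0).filter fun x => Relation.ReflTransGen Adj v x).card := by
      intro v
      have e1 : ((A'.erase a0).filter fun x => Relation.ReflTransGen Adj v x) =
          (A'.filter fun x => Relation.ReflTransGen Adj v x).erase a0 := by
        ext x
        simp only [Finset.mem_filter, Finset.mem_erase]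
        tauto
      have e2 : ((B'.erase b0).filter fun x => Relation.ReflTransGen Adj v x) =
          (B'.filter fun x => Relation.ReflTransGen Adj v x).erase b0 := by
        ext x
        simp only [Finset.mem_filter, Finset.mem_erase]
        tauto
      rw [e1, e2]
      by_cases h : Relation.ReflTransGen Adj v a0
      · have hm1 : a0 ∈ A'.filter fun x => Relation.ReflTransGen Adj v x :=
          Finset.mem_filter.2 ⟨ha0, h⟩
        have hm2 : b0 ∈ B'.filter fun x => Relation.ReflTransGen Adj v x :=
          Finset.mem_filter.2 ⟨hb0, (hiff v).1 h⟩
        rw [Finset.card_erase_of_mem hm1, Finset.card_erase_of_mem hm2, hbal v]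
      · have hm1 : a0 ∉ A'.filter fun x => Relation.ReflTransGen Adj v x := by
          simp only [Finset.mem_filter]
          tauto
        have hm2 : b0 ∉ B'.filter fun x => Relation.ReflTransGen Adj v x := by
          simp only [Finset.mem_filter]
          intro hc
          exact h ((hiff v).2 hc.2)
        rw [Finset.erase_eq_of_notMem hm1, Finset.erase_eq_of_notMem hm2, hbal v]
    obtain ⟨M', hM'match, hM'card, hM'cost⟩ :=
      ih (A'.erase a0) (B'.erase b0)
        ((A'.erase_subset a0).trans hA'A) ((B'.erase_subset b0).trans hB'B)
        (by rw [Finset.card_erase_of_mem ha0, hA']; omega) (by rw [Finset.card_erase_of_mem hb0, hB']; omega)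
        hbal'
    -- assemble the matching
    refine ⟨insert (a0, b0) M', ?_, ?_, ?_⟩
    · obtain ⟨hm1, hm2, hm3⟩ := hM'match
      refine ⟨?_, ?_, ?_⟩
      · intro e he
        rcases Finset.mem_insert.1 he with rfl | he
        · exact ⟨ha0, hb0⟩
        · exact ⟨(A'.erase_subset a0) (hm1 e he).1, (B'.erase_subset b0) (hm1 e he).2⟩
      · intro e he e' he' h1
        rcases Finset.mem_insert.1 he with rfl | he <;>
          rcases Finset.mem_insert.1 he' with rfl | he'
        · rfl
        · exact absurd ((h1 ▸ Finset.mem_erase.1 (hm1 e' he').1).1 rfl).elim id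
        · exact absurd ((h1.symm ▸ Finset.mem_erase.1 (hm1 e he).1).1 rfl).elim id
        · exact hm2 e he e' he' h1
      · intro e he e' he' h1
        rcases Finset.mem_insert.1 he with rfl | he <;>
          rcases Finset.mem_insert.1 he' with rfl | he'
        · rfl
        · exact absurd ((h1 ▸ Finset.mem_erase.1 (hm1 e' he').2).1 rfl).elim id
        · exact absurd ((h1.symm ▸ Finset.mem_erase.1 (hm1 e he).2).1 rfl).elim id
        · exact hm3 e he e' he' h1
    · have hnm : (a0, b0) ∉ M' := by
        intro h
        exact (Finset.mem_erase.1 (hM'match.1 _ h).1).1 rfl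
      rw [Finset.card_insert_of_notMem hnm, hM'card]
    · have hnm : (a0, b0) ∉ M' := by
        intro h
        exact (Finset.mem_erase.1 (hM'match.1 _ h).1).1 rfl
      have hsum : matchCost (insert (a0, b0) M') = dist a0 b0 + matchCost M' := by
        rw [matchCost, Finset.sum_insert hnm]; rfl
      rw [hsum]
      have hkey : (2 * (n : ℝ) - 2 * (m : ℝ) - 1) * w +
          ((m : ℝ) * (2 * (n : ℝ) - (m : ℝ))) * w =
          (((m : ℕ) + 1 : ℝ) * (2 * (n : ℝ) - ((m : ℕ) + 1 : ℝ))) * w := by ring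
      calc dist a0 b0 + matchCost M'
          ≤ (2 * (n : ℝ) - 2 * (m : ℝ) - 1) * w +
            ((m : ℝ) * (2 * (n : ℝ) - (m : ℝ))) * w := add_le_add hdist hM'cost
        _ = (((m + 1 : ℕ) : ℝ) * (2 * (n : ℝ) - ((m + 1 : ℕ) : ℝ))) * w := by
            push_cast
            ring

/-- let `G` (given by its adjacency relation `Adj`) be a graph on vertex set
`A ∪ B` all of whose edges have Euclidean length at most `w`, and suppose every connected
component `X` of `G` satisfies `|X ∩ A| = |X ∩ B|`.  Then there exists a perfect matching
between `A` and `B` of cost at most `n²·w`; in particular `cost(Mopt) ≤ n²·w`. -/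
theorem stmt15 (d n : ℕ) (hn : 1 ≤ n) (A B : Finset (Pt d)) (hAB : Disjoint A B)
    (hA : A.card = n) (hB : B.card = n)
    (w : ℝ) (Adj : Pt d → Pt d → Prop)
    (hsym : ∀ u v, Adj u v → Adj v u)
    (hvert : ∀ u v, Adj u v → u ∈ A ∪ B ∧ v ∈ A ∪ B)
    (hlen : ∀ u v, Adj u v → dist u v ≤ w)
    (hbal : ∀ v ∈ A ∪ B,
      (A.filter fun a => Relation.ReflTransGen Adj v a).card =
      (B.filter fun b => Relation.ReflTransGen Adj v b).card)
    (Mopt : Finset (Pt d × Pt d)) (hMopt : IsMatching A B Mopt) (hMoptcard : Mopt.card = n)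
    (hMoptmin : ∀ M'' : Finset (Pt d × Pt d),
      IsMatching A B M'' → M''.card = n → matchCost Mopt ≤ matchCost M'') :
    (∃ M : Finset (Pt d × Pt d),
      IsMatching A B M ∧ M.card = n ∧ matchCost M ≤ (n : ℝ) ^ 2 * w) ∧
    matchCost Mopt ≤ (n : ℝ) ^ 2 * w := by
  have hbal' : ∀ v : Pt d,
      (A.filter fun x => Relation.ReflTransGen Adj v x).card =
      (B.filter fun x => Relation.ReflTransGen Adj v x).card := by
    intro v
    by_cases hv : v ∈ A ∪ B
    · exact hbal v hv
    · have hempty : ∀ (S : Finset (Pt d)), S ⊆ A ∪ B →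
          (S.filter fun x => Relation.ReflTransGen Adj v x) = ∅ := by
        intro S hS
        rw [Finset.filter_eq_empty_iff]
        intro x hx hr
        rcases Relation.ReflTransGen.cases_head hr with rfl | ⟨c, hc, _⟩
        · exact hv (hS hx)
        · exact hv (hvert _ _ hc).1
      rw [hempty A Finset.subset_union_left, hempty B Finset.subset_union_right]
  obtain ⟨M, hMmatch, hMcard, hMcost⟩ :=
    main_lemma A B hAB n hA hB w Adj hsym hvert hlen n A B (le_refl A) (le_refl B) hA hB hbal'
  have hMcost' : matchCost M ≤ (n : ℝ) ^ 2 * w := by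
    have : ((n : ℝ) * (2 * (n : ℝ) - (n : ℝ))) * w = (n : ℝ) ^ 2 * w := by ring
    linarith [hMcost, this.symm.le, this.le]
  exact ⟨⟨M, hMmatch, hMcard, hMcost'⟩,
    le_trans (hMoptmin M hMmatch hMcard) hMcost'⟩
end
end

section
/- Let H be a graph on vertex set A ∪ B such that for every pair of points p, q ∈ A ∪ B there is a path in H from p to q whose total Euclidean length is at most 2·‖p−q‖ (a Euclidean 2-spanner). Let M be a perfect matching between A and B, and let X ⊆ A ∪ B satisfy |X ∩ A| ≠ |X ∩ B|. Then H contains an edge (p′, q′) with exactly one endpoint in X such that ‖p′−q′‖ ≤ 2·cost(M). -/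
open scoped Classical

noncomputable section

/-- The total Euclidean length of a path given by its list of vertices. -/
def walkLen {d : ℕ} (L : List (Pt d)) : ℝ :=
  ((L.zip L.tail).map fun uv => dist uv.1 uv.2).sum

lemma walkLen_nonneg {d : ℕ} (L : List (Pt d)) : 0 ≤ walkLen L := by
  apply List.sum_nonneg
  intro x hx
  simp only [List.mem_map] at hx
  obtain ⟨uv, _, rfl⟩ := hx
  exact dist_nonneg

lemma walkLen_cons {d : ℕ} (a b : Pt d) (t : List (Pt d)) :
    walkLen (a :: b :: t) = dist a b + walkLen (b :: t) := by
  simp [walkLen]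

lemma cross {d : ℕ} (Adj : Pt d → Pt d → Prop) (X : Finset (Pt d)) :
    ∀ L : List (Pt d), ∀ p q, L.head? = some p → L.getLast? = some q → L.Chain' Adj →
    ((p ∈ X) ↔ (q ∉ X)) →
    ∃ u v, Adj u v ∧ ((u ∈ X ∧ v ∉ X) ∨ (u ∉ X ∧ v ∈ X)) ∧ dist u v ≤ walkLen L := by
  intro L
  induction L with
  | nil => intro p q hp; simp at hp
  | cons a t ih =>
    intro p q hp hq hc hiff
    simp at hp; subst hp
    match t with
    | [] =>
      simp at hq; subst hq; tauto
    | b :: t' =>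
      rw [List.Chain', List.isChain_cons_cons] at hc
      by_cases hab : (a ∈ X) ↔ (b ∈ X)
      · have hq' : (b :: t').getLast? = some q := by
          rw [← hq]; symm; exact List.getLast?_cons_cons ..
        obtain ⟨u, v, h1, h2, h3⟩ := ih b q rfl hq' hc.2 (by tauto)
        exact ⟨u, v, h1, h2, by rw [walkLen_cons]; linarith [dist_nonneg (x := a) (y := b)]⟩
      · refine ⟨a, b, hc.1, by tauto, ?_⟩
        rw [walkLen_cons]
        linarith [walkLen_nonneg (b :: t')]

/-- let `H` (given by its adjacency relation `Adj`) be a graph on vertex set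
`A ∪ B` such that any two points `p, q ∈ A ∪ B` are joined by a path in `H` of total
Euclidean length at most `2·‖p−q‖` (a Euclidean 2-spanner).  Let `M` be a perfect matching
and `X ⊆ A ∪ B` with `|X ∩ A| ≠ |X ∩ B|`.  Then `H` has an edge `(p′, q′)` with exactly
one endpoint in `X` and `‖p′−q′‖ ≤ 2·cost(M)`. -/
theorem stmt16 (d n : ℕ) (hn : 1 ≤ n) (A B : Finset (Pt d)) (hAB : Disjoint A B)
    (hA : A.card = n) (hB : B.card = n)
    (Adj : Pt d → Pt d → Prop)
    (hsym : ∀ u v, Adj u v → Adj v u)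
    (hvert : ∀ u v, Adj u v → u ∈ A ∪ B ∧ v ∈ A ∪ B)
    (hspanner : ∀ p ∈ A ∪ B, ∀ q ∈ A ∪ B,
      ∃ L : List (Pt d), L.head? = some p ∧ L.getLast? = some q ∧
        L.Chain' Adj ∧ walkLen L ≤ 2 * dist p q)
    (M : Finset (Pt d × Pt d)) (hM : IsMatching A B M) (hMcard : M.card = n)
    (X : Finset (Pt d)) (hX : X ⊆ A ∪ B)
    (hXcard : (X ∩ A).card ≠ (X ∩ B).card) :
    ∃ p' q' : Pt d, Adj p' q' ∧
      ((p' ∈ X ∧ q' ∉ X) ∨ (p' ∉ X ∧ q' ∈ X)) ∧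
      dist p' q' ≤ 2 * matchCost M := by
  obtain ⟨hmem, hfst, hsnd⟩ := hM
  -- Step 1: find a matching edge with exactly one endpoint in X
  have key : ∃ e ∈ M, ¬((e.1 ∈ X) ↔ (e.2 ∈ X)) := by
    by_contra h
    push_neg at h
    apply hXcard
    have hinjA : Set.InjOn Prod.fst M := fun e he e' he' hh => hfst e he e' he' hh
    have hinjB : Set.InjOn Prod.snd M := fun e he e' he' hh => hsnd e he e' he' hh
    have himA : M.image Prod.fst = A := by
      apply Finset.eq_of_subset_of_card_le
      · intro x hx
        simp only [Finset.mem_image] at hx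
        obtain ⟨e, he, rfl⟩ := hx
        exact (hmem e he).1
      · rw [Finset.card_image_of_injOn hinjA, hMcard, hA]
    have himB : M.image Prod.snd = B := by
      apply Finset.eq_of_subset_of_card_le
      · intro x hx
        simp only [Finset.mem_image] at hx
        obtain ⟨e, he, rfl⟩ := hx
        exact (hmem e he).2
      · rw [Finset.card_image_of_injOn hinjB, hMcard, hB]
    have h1 : X ∩ A = (M.filter fun e => e.1 ∈ X).image Prod.fst := by
      ext x
      simp only [Finset.mem_inter, ← himA, Finset.mem_image, Finset.mem_filter]
      constructor
      · rintro ⟨hx1, e, he, rfl⟩; exact ⟨e, ⟨he, hx1⟩, rfl⟩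
      · rintro ⟨e, ⟨he, hx⟩, rfl⟩; exact ⟨hx, e, he, rfl⟩
    have h2 : X ∩ B = (M.filter fun e => e.2 ∈ X).image Prod.snd := by
      ext x
      simp only [Finset.mem_inter, ← himB, Finset.mem_image, Finset.mem_filter]
      constructor
      · rintro ⟨hx1, e, he, rfl⟩; exact ⟨e, ⟨he, hx1⟩, rfl⟩
      · rintro ⟨e, ⟨he, hx⟩, rfl⟩; exact ⟨hx, e, he, rfl⟩
    have hfil : (M.filter fun e => e.1 ∈ X) = (M.filter fun e => e.2 ∈ X) :=
      Finset.filter_congr fun e he => by simpa using h e he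
    rw [h1, h2,
      Finset.card_image_of_injOn (hinjA.mono (fun x hx => by simp at hx ⊢; exact hx.1)),
      Finset.card_image_of_injOn (hinjB.mono (fun x hx => by simp at hx ⊢; exact hx.1)), hfil]
  obtain ⟨e, he, hne⟩ := key
  have h1 : e.1 ∈ A ∪ B := Finset.mem_union_left _ (hmem e he).1
  have h2 : e.2 ∈ A ∪ B := Finset.mem_union_right _ (hmem e he).2
  obtain ⟨L, hp, hq, hc, hlen⟩ := hspanner e.1 h1 e.2 h2
  obtain ⟨u, v, hadj, hx, hd⟩ := cross Adj X L e.1 e.2 hp hq hc (by tauto)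
  refine ⟨u, v, hadj, hx, ?_⟩
  have hd2 : dist e.1 e.2 ≤ matchCost M :=
    Finset.single_le_sum (fun i _ => dist_nonneg) he
  linarith
end
end
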